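/- Let Y_1, ..., Y_B be i.i.d. uniform on a set of size A ≥ 2, and let Y^{b-1} = {Y_1,...,Y_{b-1}} be the distinct values seen before step b. Then ∑_{b=1}^B [ (L-1)·P(Y_b ∉ Y^{b-1}) + A^{-1} E(|Y^{b-1}| log₂ |Y^{b-1}|) ] ≥ 0.5 (L-1) min(A,B) + 0.5 (B-A)^+ log₂(A/2), for any real L ≥ 1. -/

import Mathlib

open MeasureTheory ProbabilityTheory

open Finset
open scoped ENNReal

set_option linter.unusedSectionVars false
set_option maxHeartbeats 1000000

set_option linter.unusedSectionVars false
set_option maxHeartbeats 1000000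


lemma aux_nat_logb_nonneg (n : ℕ) : 0 ≤ (n:ℝ) * Real.logb 2 n := by
  rcases Nat.eq_zero_or_pos n with h | h
  · simp [h]
  · have h1 : (1:ℝ) ≤ n := by exact_mod_cast h
    exact mul_nonneg (by positivity) (Real.logb_nonneg (by norm_num) h1)

lemma aux_sum_max (A B : ℕ) (hA : 1 ≤ A) :
    min (A:ℝ) (B:ℝ) / 2 ≤ ∑ b : Fin B, max (1 - (b : ℕ) / (A:ℝ)) 0 := by
  classical
  set m : ℕ := min A B with hm
  have hmB : m ≤ B := min_le_right _ _
  have hmA : m ≤ A := min_le_left _ _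
  have hA0 : (0:ℝ) < A := by exact_mod_cast hA
  have h1 : ∑ b : Fin B, max (1 - (b:ℕ) / (A:ℝ)) 0
      = ∑ i ∈ Finset.range B, max (1 - (i:ℕ) / (A:ℝ)) 0 :=
    Fin.sum_univ_eq_sum_range (fun i => max (1 - (i:ℕ) / (A:ℝ)) 0) B
  have h2 : ∑ i ∈ Finset.range m, max (1 - (i:ℕ) / (A:ℝ)) 0
      ≤ ∑ i ∈ Finset.range B, max (1 - (i:ℕ) / (A:ℝ)) 0 :=
    Finset.sum_le_sum_of_subset_of_nonneg (Finset.range_subset_range.2 hmB)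
      (fun i _ _ => le_max_right _ _)
  have hmax : ∀ i ∈ Finset.range m, max (1 - (i:ℕ) / (A:ℝ)) 0 = 1 - (i:ℝ)/A := by
    intro i hi
    rw [Finset.mem_range] at hi
    have hiA : (i:ℝ) ≤ A := by exact_mod_cast le_of_lt (lt_of_lt_of_le hi hmA)
    exact max_eq_left (by rw [sub_nonneg, div_le_one hA0]; exact hiA)
  have h3 : ∑ i ∈ Finset.range m, max (1 - (i:ℕ) / (A:ℝ)) 0
      = m - (∑ i ∈ Finset.range m, (i:ℝ)) / A := by
    rw [Finset.sum_congr rfl hmax, Finset.sum_sub_distrib, Finset.sum_const, Finset.card_range,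
      nsmul_eq_mul, mul_one, ← Finset.sum_div]
  have hgauss : (∑ i ∈ Finset.range m, (i:ℝ)) = m * (m - 1) / 2 := by
    induction m with
    | zero => simp
    | succ k ih => rw [Finset.sum_range_succ, ih]; push_cast; ring
  have hmin : min (A:ℝ) (B:ℝ) = (m:ℝ) := by rw [hm]; push_cast [Nat.cast_min]; rfl
  rw [hmin, h1]
  refine le_trans ?_ h2
  rw [h3, hgauss]
  have hm1 : (m:ℝ) - 1 ≤ A := by
    have : (m:ℝ) ≤ A := by exact_mod_cast hmA
    linarith
  have hm0 : (0:ℝ) ≤ m := by positivity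
  rw [div_div]
  have key : (m:ℝ) * (m-1) / (2*A) ≤ m / 2 := by
    rw [div_le_div_iff₀ (by positivity) (by norm_num)]
    nlinarith
  linarith

lemma aux_count (A B : ℕ) :
    (((Finset.univ.filter fun b : Fin B => A ≤ (b:ℕ)).card : ℝ)) = max ((B:ℝ) - A) 0 := by
  classical
  have h1 : (Finset.univ.filter fun b : Fin B => A ≤ (b:ℕ)).card = B - A := by
    rw [Finset.card_filter]
    rw [show (∑ i : Fin B, if A ≤ (i:ℕ) then 1 else 0)
        = ∑ i : Fin B, (fun k : ℕ => if A ≤ k then 1 else 0) (i:ℕ) from rfl]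
    rw [Fin.sum_univ_eq_sum_range (fun k : ℕ => if A ≤ k then 1 else 0) B]
    rw [← Finset.card_filter]
    have h : (Finset.range B).filter (fun i => A ≤ i) = Finset.Ico A B := by
      ext i
      simp only [Finset.mem_filter, Finset.mem_range, Finset.mem_Ico]
      exact ⟨fun ⟨a, c⟩ => ⟨c, a⟩, fun ⟨a, c⟩ => ⟨c, a⟩⟩
    rw [h, Nat.card_Ico]
  rw [h1]
  rcases le_total A B with h | h
  · rw [max_eq_left (sub_nonneg.2 (by exact_mod_cast h))]
    push_cast [h]; ring
  · rw [Nat.sub_eq_zero_of_le h, max_eq_right (sub_nonpos.2 (by exact_mod_cast h))]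
    simp

lemma aux_card_filter_lt (B : ℕ) (b : Fin B) :
    (Finset.univ.filter (fun i : Fin B => i < b)).card = (b:ℕ) := by
  classical
  rw [Finset.card_filter]
  rw [show (∑ i : Fin B, if i < b then 1 else 0)
      = ∑ i : Fin B, (fun k : ℕ => if k < (b:ℕ) then 1 else 0) (i:ℕ) from
    Finset.sum_congr rfl (fun i _ => by simp only [Fin.lt_def])]
  rw [Fin.sum_univ_eq_sum_range (fun k : ℕ => if k < (b:ℕ) then 1 else 0) B]
  rw [← Finset.card_filter]
  have h : (Finset.range B).filter (fun k => k < (b:ℕ)) = Finset.range (b:ℕ) := by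
    ext k
    simp only [Finset.mem_filter, Finset.mem_range]
    exact ⟨fun ⟨_, h2⟩ => h2, fun h1 => ⟨lt_trans h1 b.isLt, h1⟩⟩
  rw [h, Finset.card_range]


lemma aux_abs_nlogn (n C : ℕ) (h : n ≤ C) (hC : 1 ≤ C) :
    ‖(n:ℝ) * Real.log n‖ ≤ (C:ℝ) * Real.log (C:ℝ) := by
  have hC0 : (0:ℝ) ≤ Real.log C := Real.log_nonneg (by exact_mod_cast hC)
  rcases Nat.eq_zero_or_pos n with h0 | h0
  · simp only [h0, Nat.cast_zero, zero_mul, norm_zero]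
    positivity
  · have h1 : (1:ℝ) ≤ n := by exact_mod_cast h0
    rw [Real.norm_of_nonneg (mul_nonneg (by positivity) (Real.log_nonneg h1))]
    exact mul_le_mul (by exact_mod_cast h)
      (Real.log_le_log (by positivity) (by exact_mod_cast h)) (Real.log_nonneg h1)
      (by positivity)

lemma jensen_part {Ω : Type*} [MeasureSpace Ω] [IsProbabilityMeasure (volume : Measure Ω)]
    (f : Ω → ℕ) (hf : Measurable fun ω => (f ω : ℝ)) (C : ℕ) (hC : 2 ≤ C)
    (hfC : ∀ ω, f ω ≤ C) (hEf : (C:ℝ)/2 ≤ ∫ ω, (f ω : ℝ)) :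
    (C:ℝ)/2 * Real.logb 2 ((C:ℝ)/2) ≤ ∫ ω, (f ω : ℝ) * Real.logb 2 (f ω) := by
  have hC1 : (1:ℕ) ≤ C := le_trans one_le_two hC
  have hCr : (2:ℝ) ≤ C := by exact_mod_cast hC
  have hNi : Integrable (fun ω => (f ω : ℝ)) volume :=
    Integrable.mono' (integrable_const (C:ℝ)) hf.aestronglyMeasurable
      (ae_of_all _ fun ω => by
        rw [Real.norm_of_nonneg (by positivity)]; exact_mod_cast hfC ω)
  have hlm : Measurable (fun ω => (f ω : ℝ) * Real.log (f ω)) :=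
    hf.mul (Real.measurable_log.comp hf)
  have hgi : Integrable (fun ω => (f ω : ℝ) * Real.log (f ω)) volume :=
    Integrable.mono' (integrable_const ((C:ℝ) * Real.log C)) hlm.aestronglyMeasurable
      (ae_of_all _ fun ω => aux_abs_nlogn (f ω) C (hfC ω) hC1)
  have hjen : (∫ ω, (f ω : ℝ)) * Real.log (∫ ω, (f ω : ℝ))
      ≤ ∫ ω, (f ω : ℝ) * Real.log (f ω) :=
    Real.convexOn_mul_log.map_integral_le Real.continuous_mul_log.continuousOn isClosed_Ici
      (ae_of_all _ fun ω => Set.mem_Ici.2 (by positivity)) hNi hgi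
  have hC2 : (1:ℝ) ≤ (C:ℝ)/2 := by linarith
  have hstep : (C:ℝ)/2 * Real.log ((C:ℝ)/2) ≤ (∫ ω, (f ω : ℝ)) * Real.log (∫ ω, (f ω : ℝ)) :=
    mul_le_mul hEf (Real.log_le_log (by positivity) hEf) (Real.log_nonneg hC2)
      (le_trans (by linarith) hEf)
  calc (C:ℝ)/2 * Real.logb 2 ((C:ℝ)/2)
      = ((C:ℝ)/2 * Real.log ((C:ℝ)/2)) * (Real.log 2)⁻¹ := by
        rw [← Real.log_div_log]; ring
    _ ≤ (∫ ω, (f ω : ℝ) * Real.log (f ω)) * (Real.log 2)⁻¹ :=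
        mul_le_mul_of_nonneg_right (le_trans hstep hjen)
          (inv_nonneg.2 (Real.log_nonneg one_le_two))
    _ = ∫ ω, (f ω : ℝ) * Real.logb 2 (f ω) := by
        rw [← integral_mul_const]
        refine integral_congr_ae (Filter.Eventually.of_forall fun ω => ?_)
        show (f ω:ℝ) * Real.log (f ω) * (Real.log 2)⁻¹ = (f ω:ℝ) * Real.logb 2 (f ω)
        rw [← Real.log_div_log]; ring


section main
variable {Ω X : Type*} [MeasureSpace Ω] [IsProbabilityMeasure (volume : Measure Ω)]
    [Fintype X] [Nonempty X] [DecidableEq X] [MeasurableSpace X] [MeasurableSingletonClass X]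
    (A B : ℕ) (hA : Fintype.card X = A) (hA2 : 2 ≤ A)
    (Y : Fin B → Ω → X)
    (hmeas : ∀ i, Measurable (Y i))
    (hindep : iIndepFun Y volume)
    (hunif : ∀ i, Measure.map (Y i) volume = (PMF.uniformOfFintype X).toMeasure)

lemma aux_card_filter_lt' (b : Fin B) :
    (Finset.univ.filter (fun i : Fin B => i < b)).card = (b:ℕ) := by
  classical
  rw [Finset.card_filter]
  rw [show (∑ i : Fin B, if i < b then 1 else 0)
      = ∑ i : Fin B, (fun k : ℕ => if k < (b:ℕ) then 1 else 0) (i:ℕ) from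
    Finset.sum_congr rfl (fun i _ => by simp only [Fin.lt_def])]
  rw [Fin.sum_univ_eq_sum_range (fun k : ℕ => if k < (b:ℕ) then 1 else 0) B]
  rw [← Finset.card_filter]
  have h : (Finset.range B).filter (fun k => k < (b:ℕ)) = Finset.range (b:ℕ) := by
    ext k
    simp only [Finset.mem_filter, Finset.mem_range]
    exact ⟨fun ⟨_, h2⟩ => h2, fun h1 => ⟨lt_trans h1 b.isLt, h1⟩⟩
  rw [h, Finset.card_range]

include hA hA2 hmeas hunif in
lemma aux_single (i : Fin B) (x : X) : volume (Y i ⁻¹' {x}) = (A : ℝ≥0∞)⁻¹ := by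
  rw [← Measure.map_apply (hmeas i) (measurableSet_singleton x), hunif i,
    PMF.toMeasure_apply_singleton _ _ (measurableSet_singleton x),
    PMF.uniformOfFintype_apply, hA]

lemma aux_exp_half (A b : ℕ) (hA2 : 2 ≤ A) (hb : A ≤ b) :
    (1 - (A:ℝ)⁻¹)^b ≤ 1/2 := by
  have hA0 : (0:ℝ) < A := by exact_mod_cast lt_of_lt_of_le two_pos hA2
  have hinv1 : (A:ℝ)⁻¹ ≤ 1 := by
    rw [inv_le_one₀ hA0]; exact_mod_cast le_trans one_le_two hA2
  have hr0 : (0:ℝ) ≤ 1 - (A:ℝ)⁻¹ := by linarith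
  have hrexp : 1 - (A:ℝ)⁻¹ ≤ Real.exp (-(A:ℝ)⁻¹) := by
    have := Real.add_one_le_exp (-(A:ℝ)⁻¹); linarith
  have h1 : (1 - (A:ℝ)⁻¹)^b ≤ Real.exp (-(A:ℝ)⁻¹)^b := pow_le_pow_left₀ hr0 hrexp _
  have h2 : Real.exp (-(A:ℝ)⁻¹)^b = Real.exp ((b:ℝ) * (-(A:ℝ)⁻¹)) := (Real.exp_nat_mul _ _).symm
  have h3 : (b:ℝ) * (-(A:ℝ)⁻¹) ≤ -1 := by
    have hAb : (A:ℝ) ≤ (b:ℝ) := by exact_mod_cast hb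
    have h4 : (1:ℝ) ≤ (b:ℝ) * (A:ℝ)⁻¹ := by
      rw [← mul_inv_cancel₀ (ne_of_gt hA0)]
      exact mul_le_mul_of_nonneg_right hAb (by positivity)
    rw [mul_neg]; linarith
  have h5 : Real.exp ((b:ℝ) * (-(A:ℝ)⁻¹)) ≤ Real.exp (-1) := Real.exp_le_exp.2 h3
  have h6 : Real.exp (-1:ℝ) ≤ 1/2 := by
    rw [Real.exp_neg]
    have h2e : (2:ℝ) ≤ Real.exp 1 := by have := Real.add_one_le_exp (1:ℝ); linarith
    rw [show (1:ℝ)/2 = 2⁻¹ by norm_num]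
    exact inv_anti₀ two_pos h2e
  linarith [h1, h2 ▸ h5]

include hA hA2 hmeas hindep hunif in
lemma aux_EN (b : Fin B) (hb : A ≤ (b:ℕ)) :
    (A:ℝ)/2 ≤ ∫ ω,
      (((Finset.univ.filter (fun i : Fin B => i < b)).image (fun i => Y i ω)).card : ℝ) := by
  classical
  have hg : Measurable (fun ω (i : Fin B) => Y i ω) := measurable_pi_lambda _ hmeas
  have hA0 : (0:ℝ) < A := by exact_mod_cast lt_of_lt_of_le two_pos hA2
  have hmemx : ∀ x : X, MeasurableSet {ω | x ∈
      (Finset.univ.filter (fun i : Fin B => i < b)).image (fun i => Y i ω)} := by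
    intro x
    exact hg ((Set.to_countable {v : Fin B → X | x ∈
      (Finset.univ.filter (fun i : Fin B => i < b)).image (fun i => v i)}).measurableSet)
  have hmemnx : ∀ x : X, MeasurableSet {ω | x ∉
      (Finset.univ.filter (fun i : Fin B => i < b)).image (fun i => Y i ω)} :=
    fun x => (hmemx x).compl
  have hocc : ∀ x : X, volume {ω | x ∉
      (Finset.univ.filter (fun i : Fin B => i < b)).image (fun i => Y i ω)}
      = (1 - (A:ℝ≥0∞)⁻¹)^(b:ℕ) := by
    intro x
    have hEq : {ω | x ∉ (Finset.univ.filter (fun i : Fin B => i < b)).image (fun i => Y i ω)}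
        = ⋂ i ∈ Finset.univ.filter (fun i : Fin B => i < b), Y i ⁻¹' ({x}ᶜ) := by
      ext ω
      simp only [Set.mem_setOf_eq, Finset.mem_image, not_exists, Set.mem_iInter,
        Set.mem_preimage, Set.mem_compl_iff, Set.mem_singleton_iff]
      tauto
    rw [hEq, hindep.meas_biInter (fun i _ => ⟨{x}ᶜ, (measurableSet_singleton x).compl, rfl⟩)]
    have hterm : ∀ i ∈ Finset.univ.filter (fun i : Fin B => i < b),
        volume (Y i ⁻¹' ({x}ᶜ)) = 1 - (A:ℝ≥0∞)⁻¹ := by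
      intro i _
      rw [Set.preimage_compl, prob_compl_eq_one_sub ((hmeas i) (measurableSet_singleton x)),
        aux_single A B hA hA2 Y hmeas hunif i x]
    rw [Finset.prod_congr rfl hterm, Finset.prod_const, aux_card_filter_lt' B b]
  have hinvle : (A:ℝ≥0∞)⁻¹ ≤ 1 := by
    rw [ENNReal.inv_le_one]
    exact_mod_cast le_trans one_le_two hA2
  have hhalf : ∀ x : X, (1:ℝ)/2 ≤ (volume {ω | x ∈
      (Finset.univ.filter (fun i : Fin B => i < b)).image (fun i => Y i ω)}).toReal := by
    intro x
    have hc : {ω | x ∈ (Finset.univ.filter (fun i : Fin B => i < b)).image (fun i => Y i ω)}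
        = {ω | x ∉ (Finset.univ.filter (fun i : Fin B => i < b)).image (fun i => Y i ω)}ᶜ := by
      ext ω; simp
    rw [hc, prob_compl_eq_one_sub (hmemnx x),
      ENNReal.toReal_sub_of_le prob_le_one ENNReal.one_ne_top, ENNReal.toReal_one]
    have hoccR : (volume {ω | x ∉
        (Finset.univ.filter (fun i : Fin B => i < b)).image (fun i => Y i ω)}).toReal
        = (1 - (A:ℝ)⁻¹)^(b:ℕ) := by
      rw [hocc x, ENNReal.toReal_pow,
        ENNReal.toReal_sub_of_le hinvle ENNReal.one_ne_top, ENNReal.toReal_one,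
        ENNReal.toReal_inv]
      simp
    rw [hoccR]
    have := aux_exp_half A (b:ℕ) hA2 hb
    linarith
  have hcard : ∀ ω : Ω,
      ((((Finset.univ.filter (fun i : Fin B => i < b)).image (fun i => Y i ω)).card : ℕ) : ℝ)
      = ∑ x : X, Set.indicator {ω' | x ∈
          (Finset.univ.filter (fun i : Fin B => i < b)).image (fun i => Y i ω')}
          (fun _ => (1:ℝ)) ω := by
    intro ω
    have h1 : ∑ x : X, Set.indicator {ω' | x ∈
        (Finset.univ.filter (fun i : Fin B => i < b)).image (fun i => Y i ω')}
        (fun _ => (1:ℝ)) ω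
        = ∑ x : X, if x ∈ (Finset.univ.filter (fun i : Fin B => i < b)).image
            (fun i => Y i ω) then (1:ℝ) else 0 := by
      refine Finset.sum_congr rfl fun x _ => ?_
      simp [Set.indicator_apply]
    rw [h1, Finset.sum_boole, Finset.filter_mem_eq_inter, Finset.univ_inter]
  have hsum : ∫ ω,
      (((Finset.univ.filter (fun i : Fin B => i < b)).image (fun i => Y i ω)).card : ℝ)
      = ∑ x : X, (volume {ω | x ∈
          (Finset.univ.filter (fun i : Fin B => i < b)).image (fun i => Y i ω)}).toReal := by
    rw [integral_congr_ae (Filter.Eventually.of_forall hcard),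
      integral_finset_sum _ (fun x _ => (integrable_const (1:ℝ)).indicator (hmemx x))]
    refine Finset.sum_congr rfl fun x _ => ?_
    rw [integral_indicator_const (1:ℝ) (hmemx x), smul_eq_mul, mul_one]; rfl
  rw [hsum]
  calc (A:ℝ)/2 = ∑ _x : X, (1/2 : ℝ) := by
        rw [Finset.sum_const, Finset.card_univ, hA, nsmul_eq_mul]; ring
    _ ≤ _ := Finset.sum_le_sum (fun x _ => hhalf x)
include hA hA2 hmeas hindep hunif in
lemma aux_pair (b i : Fin B) (hib : i ≠ b) :
    volume {ω | Y b ω = Y i ω} = (A : ℝ≥0∞)⁻¹ := by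
  classical
  have hAnz : (A : ℝ≥0∞) ≠ 0 := by
    simp only [ne_eq, Nat.cast_eq_zero]; omega
  have hEq : {ω | Y b ω = Y i ω}
      = ⋃ x ∈ (Finset.univ : Finset X), (Y b ⁻¹' {x} ∩ Y i ⁻¹' {x}) := by
    ext ω
    simp only [Set.mem_setOf_eq, Set.mem_iUnion, Finset.mem_univ, Set.mem_inter_iff,
      Set.mem_preimage, Set.mem_singleton_iff, exists_prop, true_and]
    constructor
    · intro h; exact ⟨Y i ω, h, rfl⟩
    · rintro ⟨x, h1, h2⟩; rw [h1, h2]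
  rw [hEq, measure_biUnion_finset ?_ ?_]
  · have hterm : ∀ x ∈ (Finset.univ : Finset X),
        volume (Y b ⁻¹' {x} ∩ Y i ⁻¹' {x}) = (A:ℝ≥0∞)⁻¹ * (A:ℝ≥0∞)⁻¹ := by
      intro x _
      rw [(hindep.indepFun hib.symm).measure_inter_preimage_eq_mul {x} {x}
        (measurableSet_singleton x) (measurableSet_singleton x),
        aux_single A B hA hA2 Y hmeas hunif, aux_single A B hA hA2 Y hmeas hunif]
    rw [Finset.sum_congr rfl hterm, Finset.sum_const, Finset.card_univ, hA, nsmul_eq_mul,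
      ← mul_assoc, ENNReal.mul_inv_cancel hAnz (ENNReal.natCast_ne_top A), one_mul]
  · intro x _ y _ hxy
    refine Set.disjoint_left.2 ?_
    rintro ω ⟨h1, _⟩ ⟨h2, _⟩
    simp only [Set.mem_preimage, Set.mem_singleton_iff] at h1 h2
    exact hxy (h1 ▸ h2 ▸ rfl)
  · exact fun x _ => ((hmeas b) (measurableSet_singleton x)).inter
      ((hmeas i) (measurableSet_singleton x))

include hA hA2 hmeas hindep hunif in
lemma aux_prob (b : Fin B) :
    max (1 - (b:ℕ) / (A:ℝ)) 0 ≤ (volume {ω | Y b ω ∉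
      (Finset.univ.filter (fun i : Fin B => i < b)).image (fun i => Y i ω)}).toReal := by
  classical
  have hg : Measurable (fun ω (i : Fin B) => Y i ω) := measurable_pi_lambda _ hmeas
  have hA0 : (0:ℝ) < A := by exact_mod_cast lt_of_lt_of_le two_pos hA2
  have hmemIn : MeasurableSet {ω | Y b ω ∈
      (Finset.univ.filter (fun i : Fin B => i < b)).image (fun i => Y i ω)} := by
    exact hg ((Set.to_countable {v : Fin B → X | v b ∈
      (Finset.univ.filter (fun i : Fin B => i < b)).image (fun i => v i)}).measurableSet)
  -- union bound
  have hEq : {ω | Y b ω ∈ (Finset.univ.filter (fun i : Fin B => i < b)).image (fun i => Y i ω)}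
      = ⋃ i ∈ Finset.univ.filter (fun i : Fin B => i < b), {ω | Y b ω = Y i ω} := by
    ext ω
    simp only [Set.mem_setOf_eq, Finset.mem_image, Set.mem_iUnion, exists_prop]
    constructor
    · rintro ⟨i, hi, h⟩; exact ⟨i, hi, h.symm⟩
    · rintro ⟨i, hi, h⟩; exact ⟨i, hi, h.symm⟩
  have hub : volume {ω | Y b ω ∈
      (Finset.univ.filter (fun i : Fin B => i < b)).image (fun i => Y i ω)}
      ≤ ((b:ℕ) : ℝ≥0∞) * (A : ℝ≥0∞)⁻¹ := by
    rw [hEq]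
    refine le_trans (measure_biUnion_finset_le _ _) ?_
    have : ∀ i ∈ Finset.univ.filter (fun i : Fin B => i < b),
        volume {ω | Y b ω = Y i ω} = (A : ℝ≥0∞)⁻¹ := by
      intro i hi
      simp only [Finset.mem_filter] at hi
      exact aux_pair A B hA hA2 Y hmeas hindep hunif b i (ne_of_lt hi.2)
    rw [Finset.sum_congr rfl this, Finset.sum_const, aux_card_filter_lt' B b, nsmul_eq_mul]
  have hcompl : {ω | Y b ω ∉
      (Finset.univ.filter (fun i : Fin B => i < b)).image (fun i => Y i ω)}
      = {ω | Y b ω ∈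
        (Finset.univ.filter (fun i : Fin B => i < b)).image (fun i => Y i ω)}ᶜ := rfl
  rw [hcompl, prob_compl_eq_one_sub hmemIn]
  refine max_le ?_ ENNReal.toReal_nonneg
  rw [ENNReal.toReal_sub_of_le prob_le_one ENNReal.one_ne_top, ENNReal.toReal_one]
  have htr : (volume {ω | Y b ω ∈
      (Finset.univ.filter (fun i : Fin B => i < b)).image (fun i => Y i ω)}).toReal
      ≤ (b:ℕ) / (A:ℝ) := by
    refine le_trans (ENNReal.toReal_mono ?_ hub) ?_
    · exact ENNReal.mul_ne_top (ENNReal.natCast_ne_top _)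
        (ENNReal.inv_ne_top.2 (by simp only [ne_eq, Nat.cast_eq_zero]; omega))
    · simp [ENNReal.toReal_mul, ENNReal.toReal_inv, div_eq_mul_inv]
  linarith

include hA hA2 hmeas hindep hunif in
lemma aux_exp (b : Fin B) (hb : A ≤ (b:ℕ)) :
    (A:ℝ)/2 * Real.logb 2 ((A:ℝ)/2) ≤ ∫ ω,
      (((Finset.univ.filter (fun i : Fin B => i < b)).image (fun i => Y i ω)).card : ℝ)
        * Real.logb 2
          (((Finset.univ.filter (fun i : Fin B => i < b)).image (fun i => Y i ω)).card) := by
  classical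
  have hg : Measurable (fun ω (i : Fin B) => Y i ω) := measurable_pi_lambda _ hmeas
  have hf : Measurable (fun ω =>
      ((((Finset.univ.filter (fun i : Fin B => i < b)).image (fun i => Y i ω)).card : ℕ) : ℝ)) :=
    (measurable_of_countable (fun v : Fin B → X =>
      ((((Finset.univ.filter (fun i : Fin B => i < b)).image (fun i => v i)).card : ℕ) : ℝ))).comp hg
  have hfC : ∀ ω : Ω,
      ((Finset.univ.filter (fun i : Fin B => i < b)).image (fun i => Y i ω)).card ≤ A := by
    intro ω
    rw [← hA, ← Finset.card_univ]
    exact Finset.card_le_univ _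
  exact jensen_part
    (fun ω => ((Finset.univ.filter (fun i : Fin B => i < b)).image (fun i => Y i ω)).card)
    hf A hA2 hfC (aux_EN A B hA hA2 Y hmeas hindep hunif b hb)
end main


/-- For `Y 0, …, Y (B-1)` i.i.d. uniform on a set of size `A ≥ 2`, with
`Y^{b-1} = {Y 0, …, Y (b-1)}` the set of distinct values seen before step `b`, and any real
`L ≥ 1`,
`∑_b [(L-1) P(Y b ∉ Y^{b-1}) + A⁻¹ E(|Y^{b-1}| log₂ |Y^{b-1}|)]
  ≥ 0.5 (L-1) min(A,B) + 0.5 (B-A)⁺ log₂(A/2)`. -/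
theorem stmt16 {Ω X : Type*} [MeasureSpace Ω] [IsProbabilityMeasure (volume : Measure Ω)]
    [Fintype X] [Nonempty X] [DecidableEq X] [MeasurableSpace X] [MeasurableSingletonClass X]
    (A B : ℕ) (hA : Fintype.card X = A) (hA2 : 2 ≤ A)
    (Y : Fin B → Ω → X)
    (hmeas : ∀ i, Measurable (Y i))
    (hindep : iIndepFun Y volume)
    (hunif : ∀ i, Measure.map (Y i) volume = (PMF.uniformOfFintype X).toMeasure)
    (L : ℝ) (hL : 1 ≤ L) :
    ∑ b : Fin B,
        ((L - 1) * (volume {ω | Y b ω ∉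
            (Finset.univ.filter (fun i : Fin B => i < b)).image (fun i => Y i ω)}).toReal
          + (A : ℝ)⁻¹ * ∫ ω,
              (((Finset.univ.filter (fun i : Fin B => i < b)).image (fun i => Y i ω)).card : ℝ)
                * Real.logb 2
                  (((Finset.univ.filter (fun i : Fin B => i < b)).image (fun i => Y i ω)).card))
      ≥ 0.5 * (L - 1) * min (A : ℝ) (B : ℝ)
        + 0.5 * max ((B : ℝ) - A) 0 * Real.logb 2 ((A : ℝ) / 2) := by
  
  classical
  have hL0 : (0:ℝ) ≤ L - 1 := by linarith
  have hA0 : (0:ℝ) < A := by exact_mod_cast lt_of_lt_of_le two_pos hA2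
  have key : ∀ b : Fin B,
      (L - 1) * max (1 - (b:ℕ) / (A:ℝ)) 0
        + (A:ℝ)⁻¹ * (if A ≤ (b:ℕ) then (A:ℝ)/2 * Real.logb 2 ((A:ℝ)/2) else 0)
      ≤ (L - 1) * (volume {ω | Y b ω ∉
            (Finset.univ.filter (fun i : Fin B => i < b)).image (fun i => Y i ω)}).toReal
          + (A : ℝ)⁻¹ * ∫ ω,
              (((Finset.univ.filter (fun i : Fin B => i < b)).image (fun i => Y i ω)).card : ℝ)
                * Real.logb 2
                  (((Finset.univ.filter (fun i : Fin B => i < b)).image (fun i => Y i ω)).card) := by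
    intro b
    refine add_le_add
      (mul_le_mul_of_nonneg_left (aux_prob A B hA hA2 Y hmeas hindep hunif b) hL0)
      (mul_le_mul_of_nonneg_left ?_ (by positivity))
    split_ifs with h
    · exact aux_exp A B hA hA2 Y hmeas hindep hunif b h
    · exact integral_nonneg (fun ω => aux_nat_logb_nonneg _)
  refine ge_iff_le.2 (le_trans ?_ (Finset.sum_le_sum (fun b _ => key b)))
  rw [Finset.sum_add_distrib, ← Finset.mul_sum, ← Finset.mul_sum]
  have hs1 : 0.5 * (L - 1) * min (A:ℝ) (B:ℝ)
      ≤ (L-1) * ∑ b : Fin B, max (1 - (b:ℕ)/(A:ℝ)) 0 := by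
    have h := aux_sum_max A B (le_trans one_le_two hA2)
    calc 0.5 * (L-1) * min (A:ℝ) (B:ℝ) = (L-1) * (min (A:ℝ) (B:ℝ) / 2) := by ring
      _ ≤ (L-1) * ∑ b : Fin B, max (1 - (b:ℕ)/(A:ℝ)) 0 := mul_le_mul_of_nonneg_left h hL0
  have hs2 : (A:ℝ)⁻¹ * ∑ b : Fin B, (if A ≤ (b:ℕ) then (A:ℝ)/2 * Real.logb 2 ((A:ℝ)/2) else 0)
      = 0.5 * max ((B:ℝ) - A) 0 * Real.logb 2 ((A:ℝ)/2) := by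
    rw [← Finset.sum_filter, Finset.sum_const, nsmul_eq_mul, aux_count A B]
    have hAne : (A:ℝ) ≠ 0 := ne_of_gt hA0
    rw [show (0.5:ℝ) = 1/2 by norm_num]
    field_simp
  linarith [hs1, hs2]
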